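/- Suppose W ∈ (M_d(ℝ))^N satisfies the balance equations W_{p+1}ᵀ W_{p+1} = W_p W_pᵀ for p = 1,…,N-1. Then all the matrices W_1,…,W_N have the same singular values (i.e., W_pᵀW_p and W_qᵀW_q have the same characteristic polynomial for all p, q). -/
import Mathlib


open Matrix Polynomial

lemma charmatrix_map_eval {d : ℕ} (M : Matrix (Fin d) (Fin d) ℝ) (x : ℝ) :
    (charmatrix M).map (Polynomial.evalRingHom x) = x • (1 : Matrix (Fin d) (Fin d) ℝ) - M := by
  ext i j
  by_cases h : i = j <;>
    simp [charmatrix, h, Matrix.one_apply, Matrix.smul_apply, Matrix.map_apply]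

lemma eval_charpoly {d : ℕ} (M : Matrix (Fin d) (Fin d) ℝ) (x : ℝ) :
    Polynomial.eval x M.charpoly = (x • (1 : Matrix (Fin d) (Fin d) ℝ) - M).det := by
  rw [Matrix.charpoly, ← coe_evalRingHom, RingHom.map_det, RingHom.mapMatrix_apply, charmatrix_map_eval]

lemma det_smul_one_sub_mul_comm {d : ℕ} (A B : Matrix (Fin d) (Fin d) ℝ) (x : ℝ) :
    (x • (1 : Matrix (Fin d) (Fin d) ℝ) - A * B).det
      = (x • (1 : Matrix (Fin d) (Fin d) ℝ) - B * A).det := by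
  by_cases hx : x = 0
  · subst hx
    simp only [zero_smul, zero_sub, det_neg]
    rw [det_mul, det_mul]; ring
  · have h1 : x • (1 : Matrix (Fin d) (Fin d) ℝ) - A * B
        = x • ((1 : Matrix (Fin d) (Fin d) ℝ) - (x⁻¹ • A) * B) := by
      rw [smul_sub, Matrix.smul_mul, smul_smul, mul_inv_cancel₀ hx, one_smul]
    have h2 : x • (1 : Matrix (Fin d) (Fin d) ℝ) - B * A
        = x • ((1 : Matrix (Fin d) (Fin d) ℝ) - B * (x⁻¹ • A)) := by
      rw [smul_sub, Matrix.mul_smul, smul_smul, mul_inv_cancel₀ hx, one_smul]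
    rw [h1, h2, det_smul, det_smul, det_one_sub_mul_comm]

lemma charpoly_mul_comm' {d : ℕ} (A B : Matrix (Fin d) (Fin d) ℝ) :
    (A * B).charpoly = (B * A).charpoly := by
  apply Polynomial.funext
  intro x
  rw [eval_charpoly, eval_charpoly, det_smul_one_sub_mul_comm]

/-- If `W_{p+1}ᵀ W_{p+1} = W_p W_pᵀ` for `p = 1,…,N-1`, then all the matrices
`W_1,…,W_N` have the same singular values: the characteristic polynomials of
`W_pᵀ W_p` agree for all `p`. -/
theorem balanced_same_singular_values (N d : ℕ)
    (W : ℕ → Matrix (Fin d) (Fin d) ℝ)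
    (hbal : ∀ p, 1 ≤ p → p + 1 ≤ N → (W (p + 1))ᵀ * W (p + 1) = W p * (W p)ᵀ) :
    ∀ p q, 1 ≤ p → p ≤ N → 1 ≤ q → q ≤ N →
      ((W p)ᵀ * W p).charpoly = ((W q)ᵀ * W q).charpoly := by
  have key : ∀ p, 1 ≤ p → p ≤ N → ((W p)ᵀ * W p).charpoly = ((W 1)ᵀ * W 1).charpoly := by
    intro p
    induction p with
    | zero => intro h; omega
    | succ n ih =>
      intro _ hn
      rcases Nat.eq_or_lt_of_le (Nat.one_le_iff_ne_zero.mpr (by omega) : 1 ≤ n + 1) with h1 | h1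
      · rw [← h1]
      · have hn1 : 1 ≤ n := by omega
        rw [hbal n hn1 hn, charpoly_mul_comm', ih hn1 (by omega)]
  intro p q hp hpN hq hqN
  rw [key p hp hpN, key q hq hqN]
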